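/- For an n×n Hermitian positive semidefinite matrix B and σ² > 0, the identity (1/n)·log det(I + B/σ²) = ∫_{σ²}^{∞} (1/t − (1/n)·Tr((tI + B)^{-1})) dt holds (the Shannon transform representation). -/

import Mathlib

open Matrix MeasureTheory Filter
open scoped ComplexOrder Matrix.Norms.L2Operator

/-- The key scalar improper integral. -/
lemma aux_deriv (l a : ℝ) (hl : 0 ≤ l) (ha : 0 < a) :
    ∀ t ∈ Set.Ici a, HasDerivAt (fun t => Real.log t - Real.log (t + l))
      (1 / t - 1 / (t + l)) t := by
  intro t ht
  have ht0 : (0:ℝ) < t := lt_of_lt_of_le ha ht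
  have h1 : HasDerivAt (fun t : ℝ => Real.log t) (1 / t) t := by
    simpa [one_div] using Real.hasDerivAt_log ht0.ne'
  have h2 : HasDerivAt (fun t : ℝ => Real.log (t + l)) (1 / (t + l)) t := by
    have := ((hasDerivAt_id t).add_const l).log (by positivity)
    simpa [one_div] using this
  exact h1.sub h2

lemma aux_tendsto (l : ℝ) (hl : 0 ≤ l) :
    Tendsto (fun t => Real.log t - Real.log (t + l)) atTop (nhds 0) := by
  have h1 : Tendsto (fun t : ℝ => 1 + l / t) atTop (nhds 1) := by
    have := (tendsto_const_nhds (x := l) (f := atTop)).div_atTop tendsto_id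
    simpa using tendsto_const_nhds.add this
  have h2 : Tendsto (fun t : ℝ => Real.log (1 + l / t)) atTop (nhds 0) := by
    have := (Real.continuousAt_log one_ne_zero).tendsto.comp h1
    simpa [Function.comp_def] using this
  have h3 := h2.neg
  rw [neg_zero] at h3
  apply h3.congr'
  filter_upwards [eventually_gt_atTop 0] with t ht
  rw [show 1 + l / t = (t + l) / t by field_simp]
  rw [Real.log_div (by linarith) ht.ne']
  ring

lemma aux_nonneg (l a : ℝ) (hl : 0 ≤ l) (ha : 0 < a) :
    ∀ t ∈ Set.Ioi a, 0 ≤ 1 / t - 1 / (t + l) := by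
  intro t ht
  have ht0 : (0:ℝ) < t := lt_trans ha ht
  have : 1 / (t + l) ≤ 1 / t := by
    apply one_div_le_one_div_of_le ht0 (le_add_of_nonneg_right hl)
  linarith

lemma aux_integrable (l a : ℝ) (hl : 0 ≤ l) (ha : 0 < a) :
    IntegrableOn (fun t => 1 / t - 1 / (t + l)) (Set.Ioi a) := by
  exact integrableOn_Ioi_deriv_of_nonneg' (aux_deriv l a hl ha)
    (aux_nonneg l a hl ha) (aux_tendsto l hl)

lemma aux_integral (l a : ℝ) (hl : 0 ≤ l) (ha : 0 < a) :
    ∫ t in Set.Ioi a, (1 / t - 1 / (t + l)) = Real.log (1 + l / a) := by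
  rw [integral_Ioi_of_hasDerivAt_of_nonneg' (aux_deriv l a hl ha)
    (aux_nonneg l a hl ha) (aux_tendsto l hl)]
  rw [show 1 + l / a = (a + l) / a by field_simp]
  rw [Real.log_div (by positivity) ha.ne']
  ring

/-- Shannon transform representation of the normalized log-determinant. -/
theorem stmt_1 {n : ℕ} (hn : 0 < n) (B : Matrix (Fin n) (Fin n) ℂ) (hB : B.PosSemidef)
    (σ2 : ℝ) (hσ : 0 < σ2) :
    (1 / n : ℝ) * Real.log (((1 : Matrix (Fin n) (Fin n) ℂ) + (σ2 : ℂ)⁻¹ • B).det.re)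
      = ∫ t in Set.Ici σ2,
          (1 / t - ((1 / (n : ℂ)) * Matrix.trace
            (((t : ℂ) • (1 : Matrix (Fin n) (Fin n) ℂ) + B)⁻¹)).re) := by
  have H := hB.1
  set U : Matrix (Fin n) (Fin n) ℂ := (Matrix.IsHermitian.eigenvectorUnitary H : Matrix (Fin n) (Fin n) ℂ) with hUdef
  set lam : Fin n → ℝ := H.eigenvalues with hlam
  have hlam0 : ∀ i, 0 ≤ lam i := fun i => hB.eigenvalues_nonneg i
  have hU : U * star U = 1 := (Matrix.mem_unitaryGroup_iff).mp (Matrix.IsHermitian.eigenvectorUnitary H).2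
  have hU' : star U * U = 1 := (Matrix.mem_unitaryGroup_iff').mp (Matrix.IsHermitian.eigenvectorUnitary H).2
  have hBspec : U * Matrix.diagonal (RCLike.ofReal ∘ lam) * star U = B := H.spectral_theorem.symm
  -- conjugation lemma
  have main : ∀ a b : ℂ, U * Matrix.diagonal (fun i => a + b * (lam i : ℂ)) * star U
      = a • (1 : Matrix (Fin n) (Fin n) ℂ) + b • B := by
    intro a b
    have hd : Matrix.diagonal (fun i => a + b * (lam i : ℂ))
        = a • (1 : Matrix (Fin n) (Fin n) ℂ) + b • Matrix.diagonal (RCLike.ofReal ∘ lam) := by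
      rw [Matrix.smul_one_eq_diagonal, ← Matrix.diagonal_smul, ← Matrix.diagonal_add]
      rfl
    rw [hd, Matrix.mul_add, Matrix.add_mul, mul_smul_comm, smul_mul_assoc,
      mul_smul_comm, smul_mul_assoc, Matrix.mul_one, hU, hBspec]
  have det_conj : ∀ M : Matrix (Fin n) (Fin n) ℂ, (U * M * star U).det = M.det := by
    intro M
    have h1 : U.det * (star U).det = 1 := by rw [← Matrix.det_mul, hU, Matrix.det_one]
    rw [Matrix.det_mul, Matrix.det_mul, mul_comm U.det M.det, mul_assoc, h1, mul_one]
  have trace_conj : ∀ M : Matrix (Fin n) (Fin n) ℂ,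
      (U * M * star U).trace = M.trace := by
    intro M
    rw [Matrix.trace_mul_comm (U * M) (star U), ← Matrix.mul_assoc, hU', Matrix.one_mul]
  -- the trace formula
  have trace_eq : ∀ t : ℝ, 0 < t →
      Matrix.trace (((t : ℂ) • (1 : Matrix (Fin n) (Fin n) ℂ) + B)⁻¹)
        = ((∑ i, (t + lam i)⁻¹ : ℝ) : ℂ) := by
    intro t ht
    have hv : ∀ i, ((t : ℂ) + (lam i : ℂ)) ≠ 0 := by
      intro i
      have : (0:ℝ) < t + lam i := by have := hlam0 i; linarith
      rw [← Complex.ofReal_add]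
      exact_mod_cast Complex.ofReal_ne_zero.mpr this.ne'
    have hM : (t : ℂ) • (1 : Matrix (Fin n) (Fin n) ℂ) + B
        = U * Matrix.diagonal (fun i => (t : ℂ) + (lam i : ℂ)) * star U := by
      have h := main t 1
      simp only [one_mul, one_smul] at h
      exact h.symm
    have hinv : ((t : ℂ) • (1 : Matrix (Fin n) (Fin n) ℂ) + B)⁻¹
        = U * Matrix.diagonal (fun i => ((t : ℂ) + (lam i : ℂ))⁻¹) * star U := by
      rw [hM]
      apply Matrix.inv_eq_right_inv
      calc U * Matrix.diagonal (fun i => (t : ℂ) + (lam i : ℂ)) * star U *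
            (U * Matrix.diagonal (fun i => ((t : ℂ) + (lam i : ℂ))⁻¹) * star U)
          = U * Matrix.diagonal (fun i => (t : ℂ) + (lam i : ℂ)) * (star U * U)
              * Matrix.diagonal (fun i => ((t : ℂ) + (lam i : ℂ))⁻¹) * star U := by
            simp only [Matrix.mul_assoc]
        _ = U * (Matrix.diagonal (fun i => (t : ℂ) + (lam i : ℂ))
              * Matrix.diagonal (fun i => ((t : ℂ) + (lam i : ℂ))⁻¹)) * star U := by
            rw [hU']; simp only [Matrix.mul_assoc, Matrix.one_mul]
        _ = 1 := by
            rw [Matrix.diagonal_mul_diagonal]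
            have : (fun i => ((t : ℂ) + (lam i : ℂ)) * ((t : ℂ) + (lam i : ℂ))⁻¹)
                = fun _ => (1:ℂ) := by
              funext i; exact mul_inv_cancel₀ (hv i)
            rw [this, Matrix.diagonal_one, Matrix.mul_one, hU]
    rw [hinv, trace_conj, Matrix.trace_diagonal]
    norm_cast
  -- rewrite the RHS integrand
  have hnne : (n:ℝ) ≠ 0 := Nat.cast_ne_zero.mpr hn.ne'
  rw [MeasureTheory.integral_Ici_eq_integral_Ioi]
  have hcongr : ∫ t in Set.Ioi σ2,
      (1 / t - ((1 / (n : ℂ)) * Matrix.trace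
        (((t : ℂ) • (1 : Matrix (Fin n) (Fin n) ℂ) + B)⁻¹)).re)
      = ∫ t in Set.Ioi σ2, (1/n : ℝ) * ∑ i, (1 / t - 1 / (t + lam i)) := by
    apply MeasureTheory.setIntegral_congr_fun measurableSet_Ioi
    intro t ht
    have ht0 : (0:ℝ) < t := lt_trans hσ ht
    dsimp only
    rw [trace_eq t ht0]
    have : ((1 / (n : ℂ)) * ((∑ i, (t + lam i)⁻¹ : ℝ) : ℂ)).re
        = (1/n : ℝ) * ∑ i, (t + lam i)⁻¹ := by
      rw [show (1 / (n:ℂ)) = (((1/n : ℝ)) : ℂ) by push_cast; ring]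
      rw [← Complex.ofReal_mul, Complex.ofReal_re]
    rw [this, Finset.sum_sub_distrib, Finset.sum_const, Finset.card_univ, Fintype.card_fin,
      nsmul_eq_mul, mul_sub]
    congr 1
    · field_simp
    · simp [one_div]
  rw [hcongr, MeasureTheory.integral_const_mul, MeasureTheory.integral_finset_sum]
  swap
  · intro i _
    exact aux_integrable (lam i) σ2 (hlam0 i) hσ
  -- now the determinant side
  have hdet : ((1 : Matrix (Fin n) (Fin n) ℂ) + (σ2 : ℂ)⁻¹ • B).det
      = ((∏ i, (1 + lam i / σ2) : ℝ) : ℂ) := by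
    have h1 : (1 : Matrix (Fin n) (Fin n) ℂ) + (σ2 : ℂ)⁻¹ • B
        = U * Matrix.diagonal (fun i => (1 : ℂ) + (σ2 : ℂ)⁻¹ * (lam i : ℂ)) * star U := by
      have h := main 1 ((σ2 : ℂ)⁻¹)
      simp only [one_smul] at h
      exact h.symm
    rw [h1, det_conj, Matrix.det_diagonal]
    push_cast
    exact Finset.prod_congr rfl fun i _ => by rw [div_eq_inv_mul]
  rw [hdet, Complex.ofReal_re]
  have hfac : ∀ i : Fin n, (0:ℝ) < 1 + lam i / σ2 := by
    intro i
    have := hlam0 i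
    have : 0 ≤ lam i / σ2 := div_nonneg this hσ.le
    linarith
  rw [Real.log_prod (fun i _ => (hfac i).ne'), Finset.mul_sum, Finset.mul_sum]
  exact Finset.sum_congr rfl fun i _ => by rw [aux_integral (lam i) σ2 (hlam0 i) hσ]
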